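/- Let R be a commutative ring equipped with a power structure (a_n)_{n≥0}, let u ∈ R satisfy a_n(u) = u^n for all n ≥ 0, and set H := 1 + u ∈ R. Then for every natural number l ≥ 1, the generating power series of (a_n(-(l·H)))_{n≥0} satisfies Σ_{n≥0} a_n(-(l·H)) t^n = ((1 - t)(1 - u·t))^l = (1 - H·t + u·t^2)^l in the power series ring R[[t]]. In particular, a_n(-(l·H)) is the coefficient of t^n in the polynomial (1 - H·t + u·t^2)^l. -/

import Mathlib

open PowerSeries in
/-- Let `R` be a commutative ring equipped with a power structure
`(a n)_{n ≥ 0}`, let `u ∈ R` satisfy `a n u = u ^ n` for all `n ≥ 0`, and set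
`H := 1 + u`.  Then for every natural number `l ≥ 1`, the generating power series of
`(a n (-(l • H)))_{n ≥ 0}` satisfies
`∑_{n ≥ 0} a n (-(l • H)) tⁿ = ((1 - t)(1 - u t))^l = (1 - H t + u t²)^l`
in `R[[t]]`.  In particular, `a n (-(l • H))` is the coefficient of `tⁿ` in the
polynomial `(1 - H t + u t²)^l`. -/
theorem power_structure_neg_hyperbolic_series {R : Type*} [CommRing R]
    (a : ℕ → R → R)
    (h0 : ∀ r : R, a 0 r = 1)
    (h1 : ∀ r : R, a 1 r = r)
    (hzero : ∀ n : ℕ, 1 ≤ n → a n 0 = 0)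
    (hone : ∀ n : ℕ, 1 ≤ n → a n 1 = 1)
    (hadd : ∀ (r s : R) (n : ℕ),
      a n (r + s) = ∑ i ∈ Finset.range (n + 1), a i r * a (n - i) s)
    (u : R) (hu : ∀ n : ℕ, a n u = u ^ n)
    (H : R) (hH : H = 1 + u)
    (l : ℕ) (hl : 1 ≤ l) :
    PowerSeries.mk (fun n => a n (-(l • H))) =
        ((1 - PowerSeries.X) * (1 - PowerSeries.C u * PowerSeries.X)) ^ l ∧
    ((1 - PowerSeries.X) * (1 - PowerSeries.C u * PowerSeries.X)) ^ l =
        (1 - PowerSeries.C H * PowerSeries.X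
          + PowerSeries.C u * PowerSeries.X ^ 2) ^ l ∧
    (∀ n : ℕ, a n (-(l • H)) =
      Polynomial.coeff
        ((1 - Polynomial.C H * Polynomial.X + Polynomial.C u * Polynomial.X ^ 2) ^ l)
        n) := by
  set F : R → PowerSeries R := fun r => PowerSeries.mk (fun n => a n r) with hF
  have Fmul : ∀ r s : R, F r * F s = F (r + s) := by
    intro r s
    ext n
    rw [hF]
    rw [PowerSeries.coeff_mk, PowerSeries.coeff_mul,
      Finset.Nat.sum_antidiagonal_eq_sum_range_succ
        (fun i j => (PowerSeries.coeff i (PowerSeries.mk fun n => a n r)) *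
          (PowerSeries.coeff j (PowerSeries.mk fun n => a n s)))]
    simp [hadd r s n]
  have F0 : F 0 = 1 := by
    ext n
    cases n with
    | zero => simp [hF, h0]
    | succ m => simp [hF, hzero (m + 1) (Nat.succ_le_succ (Nat.zero_le m))]
  have hgeom : ∀ v : R, PowerSeries.mk (fun n => v ^ n) * (1 - PowerSeries.C v * PowerSeries.X) = 1 := by
    intro v
    ext n
    rw [mul_sub, mul_one]
    cases n with
    | zero => simp
    | succ m =>
      have : PowerSeries.mk (fun n => v ^ n) * (PowerSeries.C v * PowerSeries.X)
          = (PowerSeries.C v * PowerSeries.mk (fun n => v ^ n)) * PowerSeries.X := by ring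
      rw [map_sub, this, PowerSeries.coeff_succ_mul_X]
      simp [pow_succ, mul_comm]
  have hFu : F u = PowerSeries.mk fun n => u ^ n := by
    ext n; simp [hF, hu]
  have hF1 : F 1 = PowerSeries.mk fun n => (1 : R) ^ n := by
    ext n
    cases n with
    | zero => simp [hF, h0]
    | succ m => simp [hF, hone (m + 1) (Nat.succ_le_succ (Nat.zero_le m))]
  have hG : F H * ((1 - PowerSeries.X) * (1 - PowerSeries.C u * PowerSeries.X)) = 1 := by
    rw [hH, ← Fmul, hFu, hF1]
    have g1 := hgeom 1
    rw [map_one] at g1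
    calc (PowerSeries.mk fun n => (1:R) ^ n) * (PowerSeries.mk fun n => u ^ n) *
          ((1 - PowerSeries.X) * (1 - PowerSeries.C u * PowerSeries.X))
        = ((PowerSeries.mk fun n => (1:R) ^ n) * (1 - 1 * PowerSeries.X)) *
          ((PowerSeries.mk fun n => u ^ n) * (1 - PowerSeries.C u * PowerSeries.X)) := by ring
      _ = 1 := by rw [g1, hgeom u, one_mul]
  have hFl : ∀ k : ℕ, F (k • H) = (F H) ^ k := by
    intro k
    induction k with
    | zero => simpa using F0
    | succ m ih =>
      rw [succ_nsmul, ← Fmul, ih, pow_succ]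
  have key : F (-(l • H)) = ((1 - PowerSeries.X) * (1 - PowerSeries.C u * PowerSeries.X)) ^ l := by
    have h2 : F (-(l • H)) * (F (l • H) *
        ((1 - PowerSeries.X) * (1 - PowerSeries.C u * PowerSeries.X)) ^ l)
        = F (-(l • H)) := by
      rw [hFl, ← mul_pow, hG, one_pow, mul_one]
    calc F (-(l • H)) = F (-(l • H)) * F (l • H) *
          ((1 - PowerSeries.X) * (1 - PowerSeries.C u * PowerSeries.X)) ^ l := by
            rw [mul_assoc, h2]
      _ = F 0 * ((1 - PowerSeries.X) * (1 - PowerSeries.C u * PowerSeries.X)) ^ l := by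
            rw [Fmul, neg_add_cancel]
      _ = _ := by rw [F0, one_mul]
  have heq2 : (1 - PowerSeries.X) * (1 - PowerSeries.C u * PowerSeries.X)
      = 1 - PowerSeries.C H * PowerSeries.X + PowerSeries.C u * PowerSeries.X ^ 2 := by
    rw [hH, map_add, map_one]; ring
  refine ⟨key, by rw [heq2], ?_⟩
  intro n
  have hc : a n (-(l • H)) = PowerSeries.coeff n
      ((1 - PowerSeries.C H * PowerSeries.X + PowerSeries.C u * PowerSeries.X ^ 2) ^ l) := by
    rw [← heq2, ← key, hF, PowerSeries.coeff_mk]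
  rw [hc]
  have hcast : ((1 - Polynomial.C H * Polynomial.X + Polynomial.C u * Polynomial.X ^ 2 : Polynomial R) :
      PowerSeries R) = 1 - PowerSeries.C H * PowerSeries.X + PowerSeries.C u * PowerSeries.X ^ 2 := by
    push_cast
    simp [Polynomial.coe_sub, Polynomial.coe_add, Polynomial.coe_mul, Polynomial.coe_pow,
      Polynomial.coe_C, Polynomial.coe_X, Polynomial.coe_one]
  rw [← hcast, ← Polynomial.coe_pow, Polynomial.coeff_coe]
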